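/- Let n ≥ 2 and let c_{ij} ∈ ℂ for 1 ≤ i < j ≤ n satisfy c_{ij} c_{ik} + c_{ik} c_{jk} − c_{ij} c_{jk} = 0 for all i < j < k (so that P = ∑_{i<j} c_{ij} y^{ij} y^{ji} determines a double Poisson bracket on ℂ^n). Then: (1) there exists μ = (μ_1,…,μ_n) ∈ ℂ^n with c_{ij}(μ_i − μ_j) = 1 for all i < j (the moment map equation) if and only if c_{ij} ≠ 0 for all i < j; (2) if all c_{ij} are nonzero, then any two solutions differ by a constant vector (i.e., μ_i − μ′_i is independent of i), and the vector μ with μ_1 = 0 and μ_i = −1/c_{1i} for 2 ≤ i ≤ n is a solution. -/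

import Mathlib

/-- The index `1` (i.e. `0` in `Fin n`). -/
def fz (n : ℕ) (hn : 2 ≤ n) : Fin n := ⟨0, by omega⟩

lemma fz_sol (n : ℕ) (hn : 2 ≤ n) (c : Fin n → Fin n → ℂ)
    (hrel : ∀ i j k : Fin n, i < j → j < k →
      c i j * c i k + c i k * c j k - c i j * c j k = 0)
    (hc : ∀ i j : Fin n, i < j → c i j ≠ 0) :
    ∀ i j : Fin n, i < j →
      c i j * ((if i = fz n hn then 0 else -(c (fz n hn) i)⁻¹) -
        (if j = fz n hn then 0 else -(c (fz n hn) j)⁻¹)) = 1 := by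
  intro i j hij
  have hj0 : j ≠ fz n hn := by
    intro h
    have : (j : ℕ) = 0 := by simp [h, fz]
    omega
  rw [if_neg hj0]
  by_cases hi0 : i = fz n hn
  · rw [if_pos hi0]
    have hcj : c (fz n hn) j ≠ 0 := hc _ _ (hi0 ▸ hij)
    rw [← hi0]
    field_simp
    rw [zero_sub, neg_neg, mul_one_div]
    exact div_self (hc i j hij)
  · rw [if_neg hi0]
    have h0i : fz n hn < i := by
      have : (i : ℕ) ≠ 0 := fun h => hi0 (Fin.ext h)
      exact Fin.lt_def.mpr (by simp [fz]; omega)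
    have h0j : fz n hn < j := lt_trans h0i hij
    have ha : c (fz n hn) i ≠ 0 := hc _ _ h0i
    have hb : c (fz n hn) j ≠ 0 := hc _ _ h0j
    have hr := hrel (fz n hn) i j h0i hij
    field_simp
    linear_combination -hr

theorem moment_map_exists_iff (n : ℕ) (hn : 2 ≤ n) (c : Fin n → Fin n → ℂ)
    (hrel : ∀ i j k : Fin n, i < j → j < k →
      c i j * c i k + c i k * c j k - c i j * c j k = 0) :
    ((∃ μ : Fin n → ℂ, ∀ i j : Fin n, i < j → c i j * (μ i - μ j) = 1) ↔
      ∀ i j : Fin n, i < j → c i j ≠ 0) ∧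
    ((∀ i j : Fin n, i < j → c i j ≠ 0) →
      (∀ μ μ' : Fin n → ℂ,
        (∀ i j : Fin n, i < j → c i j * (μ i - μ j) = 1) →
        (∀ i j : Fin n, i < j → c i j * (μ' i - μ' j) = 1) →
        ∃ z : ℂ, ∀ i, μ i - μ' i = z) ∧
      (∀ i j : Fin n, i < j →
        c i j * ((if i = fz n hn then 0 else -(c (fz n hn) i)⁻¹) -
          (if j = fz n hn then 0 else -(c (fz n hn) j)⁻¹)) = 1)) := by
  refine ⟨⟨fun ⟨μ, hμ⟩ i j hij => left_ne_zero_of_mul_eq_one (hμ i j hij),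
    fun hc => ⟨fun i => if i = fz n hn then 0 else -(c (fz n hn) i)⁻¹,
      fz_sol n hn c hrel hc⟩⟩, fun hc => ⟨?_, fz_sol n hn c hrel hc⟩⟩
  intro μ μ' hμ hμ'
  refine ⟨μ (fz n hn) - μ' (fz n hn), fun i => ?_⟩
  by_cases hi0 : i = fz n hn
  · rw [hi0]
  · have h0i : fz n hn < i := by
      have : (i : ℕ) ≠ 0 := fun h => hi0 (Fin.ext h)
      exact Fin.lt_def.mpr (by simp [fz]; omega)
    have ha : c (fz n hn) i ≠ 0 := hc _ _ h0i
    have h1 := hμ _ _ h0i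
    have h2 := hμ' _ _ h0i
    have : μ (fz n hn) - μ i = μ' (fz n hn) - μ' i :=
      mul_left_cancel₀ ha (h1.trans h2.symm)
    linear_combination -this
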